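/- Let g_i : ℝ^{n_i} → ℝ and h : ℝ^{n_i} → ℝ be convex, X_i closed convex, and define for each player i the objective f_i(x_i, x_{−i}) := g_i(x_i) + Σ_{j=1}^N h(x_j), with f̄_i(x_i, x_{−i}) := f_i(x_i, x_{−i}) + 𝟙_{X_i}(x_i). Then for any η > 0, the function P(x) := Σ_{i=1}^N [g_i + 𝟙_{X_i} + h]^η(x_i) is an exact potential for the Moreau-smoothed game: for all i, all x_i, y_i ∈ X_i, and all x_{−i}, f̄^η_i(x_i, x_{−i}) − f̄^η_i(y_i, x_{−i}) = P(x_i, x_{−i}) − P(y_i, x_{−i}). -/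

import Mathlib

open Finset

/-- Moreau envelope over a set (envelope of `φ + indicator of S`). -/
noncomputable def moreauOn {E : Type*} [NormedAddCommGroup E] (η : ℝ)
    (φ : E → ℝ) (S : Set E) (z : E) : ℝ :=
  sInf ((fun y => φ y + ‖y - z‖ ^ 2 / (2 * η)) '' S)

lemma sInf_image_add_const {s : Set ℝ} (hs : s.Nonempty) (hb : BddBelow s) (c : ℝ) :
    sInf ((fun t => t + c) '' s) = sInf s + c := by
  exact (Monotone.map_csInf_of_continuousAt
    (Continuous.continuousAt (f := fun t : ℝ => t + c) (by continuity))
    (fun a b hab => add_le_add_left hab c) hs hb).symm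

/-- In the aggregative game `f_i(x) = g_i(x_i) + Σ_j h(x_j)`, the function
`P(x) = Σ_i [g_i + 𝟙_{X_i} + h]^η(x_i)` is an exact potential for the
Moreau-smoothed game. -/
theorem stmt13 {N n : ℕ}
    (g : Fin N → EuclideanSpace ℝ (Fin n) → ℝ) (h : EuclideanSpace ℝ (Fin n) → ℝ)
    (hg : ∀ i, ConvexOn ℝ Set.univ (g i)) (hh : ConvexOn ℝ Set.univ h)
    (X : Fin N → Set (EuclideanSpace ℝ (Fin n)))
    (hXcl : ∀ i, IsClosed (X i)) (hXconv : ∀ i, Convex ℝ (X i))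
    (hXne : ∀ i, (X i).Nonempty)
    (η : ℝ) (hη : 0 < η)
    (hbdd : ∀ i z,
      BddBelow ((fun y => g i y + h y + ‖y - z‖ ^ 2 / (2 * η)) '' X i)) :
    ∀ (x : Fin N → EuclideanSpace ℝ (Fin n)) (i : Fin N),
      ∀ xi ∈ X i, ∀ yi ∈ X i,
        moreauOn η (fun y => g i y + ∑ j, h (Function.update x i y j)) (X i) xi -
          moreauOn η (fun y => g i y + ∑ j, h (Function.update x i y j)) (X i) yi =
        (∑ j, moreauOn η (fun y => g j y + h y) (X j) (Function.update x i xi j)) -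
          (∑ j, moreauOn η (fun y => g j y + h y) (X j) (Function.update x i yi j)) := by
  intro x i xi hxi yi hyi
  set c : ℝ := ∑ j ∈ Finset.univ \ {i}, h (x j) with hc
  have hsum : ∀ y : EuclideanSpace ℝ (Fin n),
      ∑ j, h (Function.update x i y j) = h y + c := by
    intro y
    have e : (fun j => h (Function.update x i y j))
        = Function.update (fun j => h (x j)) i (h y) := by
      funext j
      by_cases hj : j = i
      · subst hj; simp
      · simp [Function.update_of_ne hj]
    rw [e, Finset.sum_update_of_mem (Finset.mem_univ i)]
  -- key: envelope of the shifted function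
  have key : ∀ z, moreauOn η (fun y => g i y + ∑ j, h (Function.update x i y j)) (X i) z
      = moreauOn η (fun y => g i y + h y) (X i) z + c := by
    intro z
    unfold moreauOn
    have himg : (fun y => (g i y + ∑ j, h (Function.update x i y j)) + ‖y - z‖ ^ 2 / (2 * η)) '' X i
        = (fun t => t + c) '' ((fun y => (g i y + h y) + ‖y - z‖ ^ 2 / (2 * η)) '' X i) := by
      rw [Set.image_image]
      apply Set.image_congr
      intro y _
      rw [hsum y]; ring
    rw [himg]
    exact sInf_image_add_const ((hXne i).image _) (by simpa using hbdd i z) c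
  -- abbreviate per-player envelopes
  set M : Fin N → EuclideanSpace ℝ (Fin n) → ℝ :=
    fun j => moreauOn η (fun y => g j y + h y) (X j) with hM
  have hsplit : ∀ w : EuclideanSpace ℝ (Fin n),
      ∑ j, M j (Function.update x i w j) = M i w + ∑ j ∈ Finset.univ \ {i}, M j (x j) := by
    intro w
    have e : (fun j => M j (Function.update x i w j))
        = Function.update (fun j => M j (x j)) i (M i w) := by
      funext j
      by_cases hj : j = i
      · subst hj; simp
      · simp [Function.update_of_ne hj]
    rw [e, Finset.sum_update_of_mem (Finset.mem_univ i)]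
  rw [key xi, key yi, hsplit xi, hsplit yi]
  ring
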